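/- Let $G$ be an infinite group. If $A$ and $B$ are $\Delta_\omega$-sets of $G$, then $A \cap B$ is a $\Delta_\omega$-set. Hence the family of all $\Delta_\omega$-sets of $G$ is a filter. -/

import Mathlib

def IsDeltaOmega {G : Type*} [Group G] (A : Set G) : Prop :=
  (1 : G) ∈ A ∧ ∀ Y : Set G, Y.Infinite →
    ∃ x ∈ Y, ∃ y ∈ Y, x ≠ y ∧ x⁻¹ * y ∈ A ∧ y⁻¹ * x ∈ A

/-- Infinite Ramsey theorem for symmetric 2-colorings of pairs. -/
theorem ramsey_pairs {α : Type*} (c : α → α → Bool) (hc : ∀ x y, c x y = c y x)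
    (Y : Set α) (hY : Y.Infinite) :
    ∃ Z ⊆ Y, Z.Infinite ∧ ∃ v : Bool, ∀ x ∈ Z, ∀ y ∈ Z, x ≠ y → c x y = v := by
  classical
  -- step: from an infinite set choose a point and a color with infinitely many partners
  have key : ∀ S : Set α, S.Infinite →
      ∃ a ∈ S, ∃ v : Bool, {y ∈ S | y ≠ a ∧ c a y = v}.Infinite := by
    intro S hS
    obtain ⟨a, ha⟩ := hS.nonempty
    refine ⟨a, ha, ?_⟩
    have hdiff : (S \ {a}).Infinite := hS.diff (Set.finite_singleton a)
    have hunion : S \ {a} ⊆ {y ∈ S | y ≠ a ∧ c a y = true} ∪ {y ∈ S | y ≠ a ∧ c a y = false} := by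
      intro y hy
      rcases Bool.eq_false_or_eq_true (c a y) with h | h
      · exact Or.inl ⟨hy.1, hy.2, h⟩
      · exact Or.inr ⟨hy.1, hy.2, h⟩
    have := hdiff.mono hunion
    rcases Set.infinite_union.mp this with h | h
    · exact ⟨true, h⟩
    · exact ⟨false, h⟩
  choose f hfmem v hv using key
  -- iterate the step
  let next : {S : Set α // S.Infinite} → {S : Set α // S.Infinite} :=
    fun S => ⟨{y ∈ S.1 | y ≠ f S.1 S.2 ∧ c (f S.1 S.2) y = v S.1 S.2}, hv S.1 S.2⟩
  let chain : ℕ → {S : Set α // S.Infinite} := fun n => next^[n] ⟨Y, hY⟩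
  have chain_succ : ∀ n, chain (n + 1) = next (chain n) := by
    intro n
    simp only [chain, Function.iterate_succ_apply']
  set a : ℕ → α := fun n => f (chain n).1 (chain n).2 with ha_def
  set bs : ℕ → Bool := fun n => v (chain n).1 (chain n).2 with hbs_def
  have hmem : ∀ n, a n ∈ (chain n).1 := fun n => hfmem _ _
  have hstep : ∀ n, ∀ y ∈ (chain (n + 1)).1,
      y ∈ (chain n).1 ∧ y ≠ a n ∧ c (a n) y = bs n := by
    intro n y hy
    rw [chain_succ n] at hy
    exact hy
  have hsub : ∀ n m, n ≤ m → (chain m).1 ⊆ (chain n).1 := by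
    intro n m hnm
    induction m with
    | zero => simp_all
    | succ k ih =>
      rcases Nat.lt_or_ge n (k + 1) with h | h
      · intro y hy
        exact ih (Nat.lt_succ_iff.mp h) ((hstep k y hy).1)
      · have : n = k + 1 := le_antisymm hnm h
        subst this; exact fun y hy => hy
  have hlt : ∀ n m, n < m → a m ≠ a n ∧ c (a n) (a m) = bs n := by
    intro n m hnm
    have : a m ∈ (chain (n + 1)).1 := hsub (n + 1) m hnm (hmem m)
    have := hstep n (a m) this
    exact ⟨this.2.1, this.2.2⟩
  -- pigeonhole on the colors
  have hpig : ∃ val : Bool, {n : ℕ | bs n = val}.Infinite := by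
    by_contra h
    push_neg at h
    have h1 := h true
    have h2 := h false
    have : (Set.univ : Set ℕ).Finite := by
      refine Set.Finite.subset (h1.union h2) ?_
      intro n _
      rcases Bool.eq_false_or_eq_true (bs n) with h | h
      · exact Or.inl h
      · exact Or.inr h
    exact Set.infinite_univ this
  obtain ⟨val, hval⟩ := hpig
  have hainj : Set.InjOn a {n : ℕ | bs n = val} := by
    intro n hn m hm hnm
    by_contra hne
    rcases lt_or_gt_of_ne hne with h | h
    · exact (hlt n m h).1 hnm.symm
    · exact (hlt m n h).1 hnm
  refine ⟨a '' {n : ℕ | bs n = val}, ?_, hval.image hainj, val, ?_⟩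
  · rintro x ⟨n, _, rfl⟩
    exact hsub 0 n (Nat.zero_le n) (hmem n)
  · rintro x ⟨n, hn, rfl⟩ y ⟨m, hm, rfl⟩ hxy
    have hne : n ≠ m := fun h => hxy (by rw [h])
    rcases lt_or_gt_of_ne hne with h | h
    · rw [(hlt n m h).2]; exact hn
    · rw [hc, (hlt m n h).2]; exact hm

theorem stmt_6 {G : Type*} [Group G] [Infinite G] (A B : Set G)
    (hA : IsDeltaOmega A) (hB : IsDeltaOmega B) :
    IsDeltaOmega (A ∩ B) := by
  classical
  refine ⟨⟨hA.1, hB.1⟩, ?_⟩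
  intro Y hY
  set c : G → G → Bool := fun x y => decide (x⁻¹ * y ∈ A ∧ y⁻¹ * x ∈ A) with hc_def
  have hsymm : ∀ x y, c x y = c y x := by
    intro x y
    simp only [hc_def, decide_eq_decide]
    tauto
  obtain ⟨Z, hZY, hZinf, v, hmono⟩ := ramsey_pairs c hsymm Y hY
  -- the color must be true, by the Δω property of A
  have hv : v = true := by
    obtain ⟨x, hx, y, hy, hxy, h1, h2⟩ := hA.2 Z hZinf
    have := hmono x hx y hy hxy
    rw [← this, hc_def]
    simp [h1, h2]
  subst hv
  -- apply the Δω property of B inside Z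
  obtain ⟨x, hx, y, hy, hxy, h1, h2⟩ := hB.2 Z hZinf
  have hcA := hmono x hx y hy hxy
  simp only [hc_def, decide_eq_true_eq] at hcA
  exact ⟨x, hZY hx, y, hZY hy, hxy, ⟨hcA.1, h1⟩, ⟨hcA.2, h2⟩⟩
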